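/- Let c₁, c₂, c₃, ... be the coefficients of a formal power series c(t) = 1 + c₁t + c₂t² + ... over a commutative ring, and suppose c(t)·b(t) = a(t) where a(t) is a polynomial of degree ≤ p and b(t) is a polynomial of degree ≤ q with constant term 1. Then for every p' > p, the Hankel determinant h_{p', q+1}(c) = det( (c_{i-j+p'})_{1 ≤ i,j ≤ q+1} ) vanishes, where c₀ = 1 and c_k = 0 for k < 0. -/

import Mathlib

/-- Extension of a sequence to integer indices by `c_k = 0` for `k < 0`. -/
def czExt {R : Type*} [CommRing R] (c : ℕ → R) : ℤ → R :=
  fun k => if 0 ≤ k then c k.toNat else 0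

theorem czExt_key {R : Type*} [CommRing R] (c : ℕ → R)
    (a b : Polynomial R) (p q : ℕ)
    (ha : a.natDegree ≤ p) (hb : b.natDegree ≤ q)
    (h : PowerSeries.mk c * (b : PowerSeries R) = (a : PowerSeries R)) :
    ∀ n : ℕ, p < n →
      ∑ j ∈ Finset.range (q + 1), czExt c ((n : ℤ) - j) * b.coeff j = 0 := by
  intro n hn
  have hcoeff : (∑ k ∈ Finset.range (n + 1), c k * b.coeff (n - k)) = a.coeff n := by
    have := congrArg (PowerSeries.coeff n) h
    rw [PowerSeries.coeff_mul] at this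
    simp only [PowerSeries.coeff_mk, Polynomial.coeff_coe] at this
    rw [← this, Finset.Nat.sum_antidiagonal_eq_sum_range_succ_mk]
  have han : a.coeff n = 0 :=
    Polynomial.coeff_eq_zero_of_natDegree_lt (lt_of_le_of_lt ha hn)
  -- rewrite the reflected sum
  have hrefl : (∑ j ∈ Finset.range (n + 1), c (n - j) * b.coeff j)
      = ∑ k ∈ Finset.range (n + 1), c k * b.coeff (n - k) := by
    rw [← Finset.sum_range_reflect]
    apply Finset.sum_congr rfl
    intro j hj
    simp only [Finset.mem_range] at hj
    have h1 : n + 1 - 1 - j = n - j := by omega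
    have h2 : n - (n - j) = j := by omega
    rw [h1, h2]
  set N := n + q + 1 with hN
  have h1 : (∑ j ∈ Finset.range (q + 1), czExt c ((n : ℤ) - j) * b.coeff j)
      = ∑ j ∈ Finset.range N, czExt c ((n : ℤ) - j) * b.coeff j := by
    apply Finset.sum_subset
    · intro x hx; simp only [Finset.mem_range] at *; omega
    · intro x _ hx
      simp only [Finset.mem_range, not_lt] at hx
      have : b.coeff x = 0 := Polynomial.coeff_eq_zero_of_natDegree_lt (by omega)
      rw [this, mul_zero]
  have h2 : (∑ j ∈ Finset.range (n + 1), czExt c ((n : ℤ) - j) * b.coeff j)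
      = ∑ j ∈ Finset.range N, czExt c ((n : ℤ) - j) * b.coeff j := by
    apply Finset.sum_subset
    · intro x hx; simp only [Finset.mem_range] at *; omega
    · intro x _ hx
      simp only [Finset.mem_range, not_lt] at hx
      have hneg : ¬ (0 ≤ (n : ℤ) - x) := by omega
      simp [czExt, hneg]
      intro; omega
  have h3 : (∑ j ∈ Finset.range (n + 1), czExt c ((n : ℤ) - j) * b.coeff j)
      = ∑ j ∈ Finset.range (n + 1), c (n - j) * b.coeff j := by
    apply Finset.sum_congr rfl
    intro j hj
    simp only [Finset.mem_range] at hj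
    have hpos : (0 : ℤ) ≤ (n : ℤ) - j := by omega
    have htn : ((n : ℤ) - j).toNat = n - j := by omega
    simp [czExt, hpos, htn]
    intro; omega
  rw [h1, ← h2, h3, hrefl, hcoeff, han]

/-- If `c(t) = 1 + c₁t + c₂t² + ⋯` satisfies `c(t)·b(t) = a(t)` with `deg a ≤ p`,
`deg b ≤ q` and `b(0) = 1`, then for every `p' > p` the Hankel determinant
`h_{p', q+1}(c) = det((c_{i-j+p'})_{1≤i,j≤q+1})` vanishes (with `c₀ = 1`,
`c_k = 0` for `k < 0`). -/
theorem stmt_10 {R : Type*} [CommRing R] (c : ℕ → R) (hc0 : c 0 = 1)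
    (a b : Polynomial R) (p q : ℕ)
    (ha : a.natDegree ≤ p) (hb : b.natDegree ≤ q) (hb0 : b.coeff 0 = 1)
    (h : PowerSeries.mk c * (b : PowerSeries R) = (a : PowerSeries R)) :
    ∀ p' : ℕ, p < p' →
      Matrix.det (Matrix.of fun i j : Fin (q + 1) =>
        czExt c (((i : ℕ) : ℤ) - ((j : ℕ) : ℤ) + (p' : ℤ))) = 0 := by
  intro p' hp'
  set M : Matrix (Fin (q + 1)) (Fin (q + 1)) R :=
    Matrix.of fun i j : Fin (q + 1) =>
      czExt c (((i : ℕ) : ℤ) - ((j : ℕ) : ℤ) + (p' : ℤ)) with hM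
  set v : Fin (q + 1) → R := fun j => b.coeff j with hv
  have hMv : M.mulVec v = 0 := by
    funext i
    have key := czExt_key c a b p q ha hb h ((i : ℕ) + p') (by omega)
    simp only [Matrix.mulVec, dotProduct, Pi.zero_apply]
    rw [← Fin.sum_univ_eq_sum_range
      (fun j => czExt c ((((i : ℕ) + p' : ℕ) : ℤ) - j) * b.coeff j) (q + 1)] at key
    rw [← key]
    apply Finset.sum_congr rfl
    intro j _
    simp only [hM, hv, Matrix.of_apply]
    congr 2
    push_cast
    ring
  have hadj : M.det • v = 0 := by
    have := congrArg (fun w => (Matrix.adjugate M).mulVec w) hMv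
    simpa [Matrix.mulVec_mulVec, Matrix.adjugate_mul, Matrix.smul_mulVec] using this
  have := congrFun hadj 0
  simp only [Pi.smul_apply, smul_eq_mul, Pi.zero_apply, hv] at this
  simpa [hb0] using this
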